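/- Let r ∈ F(q) satisfy r(q) + r(q⁻¹) = 0, where r(q⁻¹) is the image of r under the automorphism q ↦ q⁻¹ of F(q). Then the operator of multiplication by r on K is anti-self-adjoint for the loop-space form: Ω(r·f, g) + Ω(f, r·g) = 0 for all f, g ∈ K. In particular, if char F ≠ 2, this holds for r(q) = 1/(1−q) − 1/2, so the string vector field f ↦ f/(1−q) − f/2 is infinitesimally symplectic. -/

import Mathlib

open Polynomial in
theorem algebraMap_ratFunc_eq_aeval (F : Type*) [Field F] (p : F[X]) :
    algebraMap F[X] (RatFunc F) p = Polynomial.aeval RatFunc.X p := by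
  have h : (IsScalarTower.toAlgHom F F[X] (RatFunc F)) = Polynomial.aeval (RatFunc.X (K := F)) :=
    Polynomial.algHom_ext (by simp [RatFunc.algebraMap_X])
  exact DFunLike.congr_fun h p

open Polynomial in
/-- Injectivity of `aeval X⁻¹ : F[X] → F(q)`. -/
theorem aeval_inv_injective (F : Type*) [Field F] :
    Function.Injective (Polynomial.aeval (RatFunc.X (K := F))⁻¹ : F[X] →ₐ[F] RatFunc F) := by
  rw [injective_iff_map_eq_zero]
  intro p hp
  haveI : Invertible (RatFunc.X (K := F))⁻¹ :=
    invertibleOfNonzero (inv_ne_zero RatFunc.X_ne_zero)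
  have h2 : (⅟(RatFunc.X (K := F))⁻¹) = RatFunc.X := by
    rw [invOf_eq_inv, inv_inv]
  have hp' : Polynomial.eval₂ (algebraMap F (RatFunc F)) (RatFunc.X)⁻¹ p = 0 := by
    rwa [Polynomial.aeval_def] at hp
  rw [← Polynomial.eval₂_reverse_eq_zero_iff (algebraMap F (RatFunc F)) (RatFunc.X)⁻¹ p] at hp'
  rw [h2] at hp'
  have h3 : algebraMap F[X] (RatFunc F) p.reverse = 0 := by
    rw [algebraMap_ratFunc_eq_aeval, Polynomial.aeval_def]
    exact hp'
  have h4 : p.reverse = 0 := RatFunc.algebraMap_injective F (by simpa using h3)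
  exact Polynomial.reverse_eq_zero.mp h4

noncomputable section

open scoped TensorProduct

variable (F : Type*) [Field F]

/-- The automorphism `q ↦ q⁻¹` of `F(q)`: the unique `F`-algebra map sending `q` to `q⁻¹`. -/
def qinv : RatFunc F →ₐ[F] RatFunc F :=
  IsFractionRing.liftAlgHom (aeval_inv_injective F)

/-- Coefficient of `qⁿ` in the Laurent-series expansion at `q = 0`, as an `F`-linear map. -/
def coeffL (n : ℤ) : RatFunc F →ₗ[F] F where
  toFun h := ((h : LaurentSeries F)).coeff n
  map_add' a b := by
    rw [map_add, HahnSeries.coeff_add]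
  map_smul' c a := by
    rw [RingHom.id_apply, Algebra.smul_def, map_mul, smul_eq_mul,
      IsScalarTower.algebraMap_apply F (Polynomial F) (RatFunc F), Polynomial.algebraMap_apply]
    erw [← RatFunc.coe_coe]
    rw [Polynomial.coe_C, Algebra.algebraMap_self, RingHom.id_apply, PowerSeries.coe_C,
      HahnSeries.C_mul_eq_smul, HahnSeries.coeff_smul, smul_eq_mul]

/-- `Res_{q=0} (h dq)`: the coefficient of `q⁻¹` in the Laurent expansion of `h` at `q = 0`. -/
def res0 (h : RatFunc F) : F := coeffL F (-1) h

/-- `Res_{q=∞} (h dq) := −Res_{q=0} (q⁻² h(q⁻¹) dq)`. -/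
def resInf (h : RatFunc F) : F := - res0 F ((RatFunc.X)⁻¹ ^ 2 * qinv F h)

variable (V : Type*) [AddCommGroup V] [Module F V]

/-- The loop space `K := F(q) ⊗_F V` of `V`-valued rational functions. -/
abbrev LoopK := RatFunc F ⊗[F] V

/-- `f(q) ↦ f(q⁻¹)` on `K`. -/
def finv : LoopK F V →ₗ[F] LoopK F V := LinearMap.rTensor V (qinv F).toLinearMap

/-- The `V`-valued coefficient of `qⁿ` in the expansion at `q = 0` of an element of `K`. -/
def vcoeff (n : ℤ) : LoopK F V →ₗ[F] V :=
  (TensorProduct.lid F V).toLinearMap ∘ₗ LinearMap.rTensor V (coeffL F n)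

/-- The loop-space form
`Ω(f,g) = −Res_{q=0}(q⁻¹ B_q(f(q⁻¹),g(q)) dq) − Res_{q=∞}(q⁻¹ B_q(f(q⁻¹),g(q)) dq)`. -/
def Omega (B : LinearMap.BilinForm F V) (f g : LoopK F V) : F :=
  - res0 F ((RatFunc.X)⁻¹ * (LinearMap.BilinForm.baseChange (RatFunc F) B) (finv F V f) g)
  - resInf F ((RatFunc.X)⁻¹ * (LinearMap.BilinForm.baseChange (RatFunc F) B) (finv F V f) g)

/-- `K₊`: `V`-valued Laurent polynomials in `q`. -/
def Kplus : Submodule F (LoopK F V) :=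
  Submodule.span F {z : LoopK F V | ∃ (n : ℤ) (v : V), z = (RatFunc.X ^ n) ⊗ₜ[F] v}

/-- `K₋`: `V`-valued rational functions regular at `q = 0` and vanishing at `q = ∞`. -/
def Kminus : Submodule F (LoopK F V) where
  carrier := {f | (∀ n : ℤ, n < 0 → vcoeff F V n f = 0) ∧
    (∀ n : ℤ, n ≤ 0 → vcoeff F V n (finv F V f) = 0)}
  add_mem' := by
    rintro a b ⟨ha1, ha2⟩ ⟨hb1, hb2⟩
    constructor
    · intro n hn; rw [map_add, ha1 n hn, hb1 n hn, add_zero]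
    · intro n hn; rw [map_add, map_add, ha2 n hn, hb2 n hn, add_zero]
  zero_mem' := by
    constructor <;> intro n hn <;> simp
  smul_mem' := by
    rintro c a ⟨ha1, ha2⟩
    constructor
    · intro n hn; rw [map_smul, ha1 n hn, smul_zero]
    · intro n hn; rw [map_smul, map_smul, ha2 n hn, smul_zero]

/-- The value at `q = 1` of a `V`-valued Laurent polynomial (the sum of its coefficients). -/
def evalOne (f : LoopK F V) : V := ∑ᶠ n : ℤ, vcoeff F V n f

/-- Scalar `K₊ ⊂ F(q)`: the Laurent polynomials. -/
def KplusS : Submodule F (RatFunc F) :=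
  Submodule.span F (Set.range fun n : ℤ => (RatFunc.X : RatFunc F) ^ n)

/-- Scalar `K₋ ⊂ F(q)`: rational functions regular at `q = 0` and vanishing at `q = ∞`. -/
def KminusS : Submodule F (RatFunc F) where
  carrier := {h | (∀ n : ℤ, n < 0 → coeffL F n h = 0) ∧
    (∀ n : ℤ, n ≤ 0 → coeffL F n (qinv F h) = 0)}
  add_mem' := by
    rintro a b ⟨ha1, ha2⟩ ⟨hb1, hb2⟩
    constructor
    · intro n hn; rw [map_add, ha1 n hn, hb1 n hn, add_zero]
    · intro n hn; rw [map_add, map_add, ha2 n hn, hb2 n hn, add_zero]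
  zero_mem' := by
    constructor <;> intro n hn <;> simp
  smul_mem' := by
    rintro c a ⟨ha1, ha2⟩
    constructor
    · intro n hn; rw [map_smul, ha1 n hn, smul_zero]
    · intro n hn; rw [map_smul, map_smul, ha2 n hn, smul_zero]

theorem rTensor_algHom_smul {F : Type*} [Field F] (V : Type*) [AddCommGroup V] [Module F V]
    (φ : RatFunc F →ₐ[F] RatFunc F) (r : RatFunc F) (f : RatFunc F ⊗[F] V) :
    LinearMap.rTensor V φ.toLinearMap (r • f) = φ r • LinearMap.rTensor V φ.toLinearMap f := by
  induction f using TensorProduct.induction_on with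
  | zero => simp
  | tmul a v =>
      rw [TensorProduct.smul_tmul', LinearMap.rTensor_tmul, LinearMap.rTensor_tmul,
        TensorProduct.smul_tmul']
      simp [smul_eq_mul, map_mul]
  | add x y hx hy => rw [smul_add, map_add, map_add, hx, hy, smul_add]

theorem qinv_algebraMap {F : Type*} [Field F] (p : Polynomial F) :
    qinv F (algebraMap (Polynomial F) (RatFunc F) p)
      = Polynomial.aeval (RatFunc.X (K := F))⁻¹ p :=
  IsFractionRing.lift_algebraMap (aeval_inv_injective F) p

theorem qinv_X {F : Type*} [Field F] : qinv F RatFunc.X = (RatFunc.X : RatFunc F)⁻¹ := by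
  conv_lhs => rw [← RatFunc.algebraMap_X]
  rw [qinv_algebraMap, Polynomial.aeval_X]

/-- if `r(q) + r(q⁻¹) = 0` then multiplication by `r` is `Ω`-anti-self-adjoint;
in particular (if `char F ≠ 2`) this applies to `r(q) = 1/(1−q) − 1/2`. -/
theorem mul_antiselfadjoint [FiniteDimensional F V] (B : LinearMap.BilinForm F V)
    (hB : ∀ u v : V, B u v = B v u) :
    (∀ r : RatFunc F, r + qinv F r = 0 →
      ∀ f g : LoopK F V, Omega F V B (r • f) g + Omega F V B f (r • g) = 0) ∧
    (ringChar F ≠ 2 →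
      ((1 - RatFunc.X : RatFunc F)⁻¹ - 2⁻¹) + qinv F ((1 - RatFunc.X : RatFunc F)⁻¹ - 2⁻¹) = 0) := by
  constructor
  · intro r hr f g
    have hfinv : finv F V (r • f) = qinv F r • finv F V f := rTensor_algHom_smul V _ r f
    have hqr : qinv F r = -r := by linear_combination hr
    set_option synthInstance.maxHeartbeats 1000000 in
    have h1 : (RatFunc.X : RatFunc F)⁻¹
          * (LinearMap.BilinForm.baseChange (RatFunc F) B) (finv F V (r • f)) g
        + (RatFunc.X : RatFunc F)⁻¹
          * (LinearMap.BilinForm.baseChange (RatFunc F) B) (finv F V f) (r • g) = 0 := by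
      rw [hfinv, hqr, neg_smul, map_neg, LinearMap.neg_apply, map_smul, map_smul,
        LinearMap.smul_apply]
      simp only [smul_eq_mul]
      ring
    have h0 : ∀ a b : RatFunc F, a + b = 0 → res0 F a + res0 F b = 0 := by
      intro a b hab
      unfold res0
      rw [← map_add, hab, map_zero]
    have hI : ∀ a b : RatFunc F, a + b = 0 → resInf F a + resInf F b = 0 := by
      intro a b hab
      unfold resInf res0
      rw [← neg_add, ← map_add, ← mul_add, ← map_add, hab, map_zero, mul_zero,
        map_zero, neg_zero]
    unfold Omega
    linear_combination (- h0 _ _ h1) - hI _ _ h1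
  · intro hchar
    have h2 : (2 : RatFunc F) ≠ 0 := by
      intro h
      apply Ring.two_ne_zero hchar
      exact (algebraMap F (RatFunc F)).injective (by rw [map_ofNat, h, map_zero])
    have hX : (RatFunc.X : RatFunc F) ≠ 0 := RatFunc.X_ne_zero
    have hXone : (RatFunc.X : RatFunc F) ≠ 1 := by
      intro h
      exact Polynomial.X_ne_C (R := F) 1 (RatFunc.algebraMap_injective F
        (by rw [RatFunc.algebraMap_X, Polynomial.C_1, map_one]; exact h))
    have hX1 : (1 - RatFunc.X : RatFunc F) ≠ 0 := sub_ne_zero.mpr (Ne.symm hXone)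
    have hX1' : (-1 + RatFunc.X : RatFunc F) ≠ 0 := by
      intro h; apply hX1; linear_combination -h
    rw [map_sub, map_inv₀, map_sub, map_one, qinv_X, map_inv₀, map_ofNat]
    field_simp
    ring


end
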